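/- Let P be a partial order in which every nonempty directed subset has a least upper bound, and let C be a category having all filtered colimits. Then a functor F : P ⥤ C preserves filtered colimits (i.e. colimits of diagrams indexed by any small filtered category landing in P) if and only if for every nonempty directed subset D ⊆ P with least upper bound b, the cocone over the restriction of F to D (viewed as a full subposet of P) with apex F(b) and legs F(d ≤ b) is a colimit cocone in C. -/

import Mathlib

open CategoryTheory CategoryTheory.Limits

universe v u

/-- The canonical cocone on the restriction of `F : P ⥤ C` to a subset `D ⊆ P`, with apex
`F b` for an upper bound `b` of `D`, with legs `F (d ≤ b)`. -/
@[simps]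
def restrictionCocone {P : Type v} [PartialOrder P] {C : Type u} [Category.{v} C]
    (F : P ⥤ C) (D : Set P) {b : P} (hb : b ∈ upperBounds D) :
    Cocone ((Subtype.mono_coe (· ∈ D)).functor ⋙ F) where
  pt := F.obj b
  ι :=
    { app := fun d => F.map (homOfLE (hb d.2))
      naturality := fun d d' f => by
        dsimp
        rw [Category.comp_id]
        exact (F.map_comp _ _).symm.trans (congrArg F.map (Subsingleton.elim _ _)) }

section Aux

variable {P : Type v} [PartialOrder P]

theorem isFiltered_of_directedOn (D : Set P) (hne : D.Nonempty)
    (hdir : DirectedOn (· ≤ ·) D) : IsFiltered D := by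
  haveI : Nonempty D := hne.to_subtype
  haveI : IsDirected D (· ≤ ·) := ⟨fun a b => by
    obtain ⟨c, hc, h1, h2⟩ := hdir a a.2 b b.2
    exact ⟨⟨c, hc⟩, h1, h2⟩⟩
  infer_instance

/-- The cocone in `P` itself on the inclusion of `D`, with apex an upper bound `b`. -/
def lubCocone (D : Set P) {b : P} (hb : b ∈ upperBounds D) :
    Cocone (Subtype.mono_coe (· ∈ D)).functor where
  pt := b
  ι :=
    { app := fun d => homOfLE (hb d.2)
      naturality := fun _ _ _ => rfl }

/-- If `b` is a least upper bound, the cocone `lubCocone` is a colimit. -/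
def lubIsColimit (D : Set P) {b : P} (hb : IsLUB D b) : IsColimit (lubCocone D hb.1) where
  desc s := homOfLE (hb.2 fun d hd => leOfHom (s.ι.app ⟨d, hd⟩))
  fac _ _ := rfl
  uniq _ _ _ := rfl

end Aux

theorem preservesFilteredColimits_iff_directed_lub {P : Type v} [PartialOrder P]
    (hP : ∀ D : Set P, D.Nonempty → DirectedOn (· ≤ ·) D → ∃ b, IsLUB D b)
    {C : Type u} [Category.{v} C] [HasFilteredColimits C] (F : P ⥤ C) :
    PreservesFilteredColimitsOfSize.{v, v} F ↔
      ∀ (D : Set P), D.Nonempty → DirectedOn (· ≤ ·) D →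
        ∀ (b : P) (hb : IsLUB D b),
          Nonempty (IsColimit (restrictionCocone F D hb.1)) := by
  constructor
  · intro hF D hne hdir b hb
    haveI := isFiltered_of_directedOn D hne hdir
    haveI : PreservesColimit ((Subtype.mono_coe (· ∈ D)).functor) F :=
      (hF.preserves_filtered_colimits ↥D).preservesColimit
    have h := isColimitOfPreserves F (lubIsColimit D hb)
    exact ⟨h.ofIsoColimit (Cocones.ext (Iso.refl _) (fun d => by
      simp [lubCocone, restrictionCocone]))⟩
  · intro h
    constructor
    intro J _ _
    constructor
    intro G
    constructor
    intro c hc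
    -- the image of G is a directed nonempty set
    set D : Set P := Set.range G.obj with hD
    have hne : D.Nonempty := ⟨G.obj (IsFiltered.nonempty.some), Set.mem_range_self _⟩
    have hdir : DirectedOn (· ≤ ·) D := by
      rintro _ ⟨j, rfl⟩ _ ⟨j', rfl⟩
      exact ⟨G.obj (IsFiltered.max j j'), Set.mem_range_self _,
        leOfHom (G.map (IsFiltered.leftToMax j j')),
        leOfHom (G.map (IsFiltered.rightToMax j j'))⟩
    haveI := isFiltered_of_directedOn D hne hdir
    -- c.pt is the LUB of D
    have hub : c.pt ∈ upperBounds D := by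
      rintro _ ⟨j, rfl⟩
      exact leOfHom (c.ι.app j)
    have hlub : IsLUB D c.pt := by
      refine ⟨hub, fun x hx => ?_⟩
      let s : Cocone G :=
        { pt := x
          ι :=
            { app := fun j => homOfLE (hx ⟨j, rfl⟩)
              naturality := fun _ _ _ => rfl } }
      exact leOfHom (hc.desc s)
    obtain ⟨hcol⟩ := h D hne hdir c.pt hlub
    -- the corestriction G' : J ⥤ D is final
    let G' : J ⥤ D :=
      { obj := fun j => ⟨G.obj j, Set.mem_range_self j⟩
        map := fun f => homOfLE (leOfHom (G.map f)) }
    haveI : G'.Final := by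
      apply Functor.final_of_exists_of_isFiltered
      · rintro ⟨_, j, rfl⟩
        exact ⟨j, ⟨homOfLE le_rfl⟩⟩
      · intro d j s s'
        exact ⟨j, 𝟙 j, Subsingleton.elim _ _⟩
    -- whisker the colimit cocone along G'
    have h2 : IsColimit ((restrictionCocone F D hlub.1).whisker G') :=
      (Functor.Final.isColimitWhiskerEquiv G' _).symm hcol
    -- transfer along the natural isomorphism G' ⋙ ι ⋙ F ≅ G ⋙ F
    let e : G' ⋙ (Subtype.mono_coe (· ∈ D)).functor ⋙ F ≅ G ⋙ F :=
      NatIso.ofComponents (fun j => Iso.refl _) (fun f => by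
        dsimp
        rw [Category.comp_id, Category.id_comp]
        congr 1)
    let w := (restrictionCocone F D hlub.1).whisker G'
    refine ⟨IsColimit.equivOfNatIsoOfIso e w (F.mapCocone c)
      (Cocones.ext (Iso.refl _) (fun j => ?_)) h2⟩
    simp [e, w]
    exact (Category.comp_id _).trans ((Category.id_comp _).trans (congrArg F.map (Subsingleton.elim _ _)))
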